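/- In the lattice Λ with Gram matrix [[2,4,5],[4,0,3],[5,3,2]] (basis L,F,T), there is no element D with D·D = 0, L·D = 2 and F·D = 0. -/
import Mathlib

/-- In the lattice with Gram matrix `[[2,4,5],[4,0,3],[5,3,2]]`
(basis `L,F,T`), there is no element `D = xL+yF+zT` with `D·D = 0`,
`L·D = 2` and `F·D = 0`.  Here `D² = 2x²+8xy+10xz+6yz+2z²`,
`L·D = 2x+4y+5z`, `F·D = 4x+3z`. -/
theorem stmt_2 :
    ¬ ∃ x y z : ℤ,
      2*x^2 + 8*x*y + 10*x*z + 6*y*z + 2*z^2 = 0 ∧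
      2*x + 4*y + 5*z = 2 ∧
      4*x + 3*z = 0 := by
  rintro ⟨x, y, z, h1, h2, h3⟩
  have key : -70 * x^2 = 0 := by
    linear_combination 9*h1 - (22*x+18*y+6*z)*h3
  have hx : x = 0 := by nlinarith [sq_nonneg x]
  subst hx
  omega
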